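/- First-order error estimate for the prototypical method: assume there are constants C_Π > 0 and H > 0 such that |v − Π_H v|_{M,T} ≤ C_Π H |v|_{L,T} for every element T ∈ 𝒯_H and every v : 𝒩 → ℝ. Then the Galerkin approximation u_H satisfies |u − u_H|_L ≤ C_Π γ⁻¹ H |f|_{M⁻¹}, where |f|_{M⁻¹} := sup{(f, v) : v : 𝒩 → ℝ with |v|_M = 1}. -/

import Mathlib

open Finset

variable {n : ℕ} {N : Type*}

/-- The (edge-weighted) mass bilinear form `(M_S u, v)`. -/
noncomputable def Mform [Fintype N] (G : SimpleGraph N) [DecidableRel G.Adj]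
    (pos : N → EuclideanSpace ℝ (Fin n)) (α : ℝ) (S : Finset N) (u v : N → ℝ) : ℝ :=
  ∑ x ∈ S, (1 / 2 : ℝ) * ∑ y ∈ G.neighborFinset x,
    dist (pos x) (pos y) ^ ((2 : ℝ) - α) * (u x * v x)

/-- The (edge-weighted) stiffness bilinear form `(L_S u, v)`. -/
noncomputable def Lform [Fintype N] (G : SimpleGraph N) [DecidableRel G.Adj]
    (pos : N → EuclideanSpace ℝ (Fin n)) (α : ℝ) (S : Finset N) (u v : N → ℝ) : ℝ :=
  ∑ x ∈ S, (1 / 2 : ℝ) * ∑ y ∈ G.neighborFinset x,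
    ((u x - u y) * (v x - v y)) / dist (pos x) (pos y) ^ α

/-- `|v|_{M,S}`. -/
noncomputable def Mnorm [Fintype N] (G : SimpleGraph N) [DecidableRel G.Adj]
    (pos : N → EuclideanSpace ℝ (Fin n)) (α : ℝ) (S : Finset N) (v : N → ℝ) : ℝ :=
  Real.sqrt (Mform G pos α S v v)

/-- `|v|_{L,S}`. -/
noncomputable def Lnorm [Fintype N] (G : SimpleGraph N) [DecidableRel G.Adj]
    (pos : N → EuclideanSpace ℝ (Fin n)) (α : ℝ) (S : Finset N) (v : N → ℝ) : ℝ :=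
  Real.sqrt (Lform G pos α S v v)

/-- The element average `q_T(v) = (M_T v, 1) / |1|_{M,T}^2`. -/
noncomputable def avg [Fintype N] (G : SimpleGraph N) [DecidableRel G.Adj]
    (pos : N → EuclideanSpace ℝ (Fin n)) (α : ℝ) (T : Finset N) (v : N → ℝ) : ℝ :=
  Mform G pos α T v (fun _ => 1) / Mform G pos α T (fun _ => 1) (fun _ => 1)

/-- Euclidean inner product of functions on the node set. -/
noncomputable def ip [Fintype N] (u v : N → ℝ) : ℝ := ∑ x, u x * v x

/-- Length of a walk: the sum of Euclidean edge lengths. -/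
noncomputable def wlen (G : SimpleGraph N) (pos : N → EuclideanSpace ℝ (Fin n))
    {x y : N} (w : G.Walk x y) : ℝ :=
  (w.darts.map (fun d => dist (pos d.toProd.1) (pos d.toProd.2))).sum

/-- Graph distance from `x` to the boundary set `bnd`, along paths inside `T`. -/
noncomputable def distT (G : SimpleGraph N) (pos : N → EuclideanSpace ℝ (Fin n))
    (T bnd : Finset N) (x : N) : ℝ :=
  sInf {ℓ : ℝ | ∃ y ∈ bnd, ∃ w : G.Walk x y, (∀ z ∈ w.support, z ∈ T) ∧ ℓ = wlen G pos w}

/-- The non-normalized bubble function `b̃_T`. -/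
noncomputable def btilde [DecidableEq N] (G : SimpleGraph N) (pos : N → EuclideanSpace ℝ (Fin n))
    (T bnd : Finset N) : N → ℝ :=
  fun x => if x ∈ T then distT G pos T bnd x else 0
section Aux
variable [Fintype N] (G : SimpleGraph N) [DecidableRel G.Adj]
  (pos : N → EuclideanSpace ℝ (Fin n)) (α : ℝ)

noncomputable def wt (x : N) : ℝ :=
  (1 / 2 : ℝ) * ∑ y ∈ G.neighborFinset x, dist (pos x) (pos y) ^ ((2 : ℝ) - α)

lemma wt_nonneg (x : N) : 0 ≤ wt G pos α x :=
  mul_nonneg (by norm_num) (Finset.sum_nonneg fun y _ => Real.rpow_nonneg dist_nonneg _)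

lemma Mform_eq (S : Finset N) (u v : N → ℝ) :
    Mform G pos α S u v = ∑ x ∈ S, wt G pos α x * (u x * v x) := by
  unfold Mform wt
  refine Finset.sum_congr rfl fun x _ => ?_
  rw [mul_assoc, ← Finset.sum_mul]

lemma Mform_nonneg (S : Finset N) (v : N → ℝ) : 0 ≤ Mform G pos α S v v := by
  rw [Mform_eq]
  exact Finset.sum_nonneg fun x _ => mul_nonneg (wt_nonneg G pos α x) (mul_self_nonneg _)

lemma Lform_nonneg (S : Finset N) (v : N → ℝ) : 0 ≤ Lform G pos α S v v := by
  unfold Lform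
  refine Finset.sum_nonneg fun x _ => mul_nonneg (by norm_num)
    (Finset.sum_nonneg fun y _ => div_nonneg (mul_self_nonneg _) (Real.rpow_nonneg dist_nonneg _))

lemma neighbor_nonempty (hcard : 1 < Fintype.card N) (hconn : G.Connected) (x : N) :
    (G.neighborFinset x).Nonempty := by
  obtain ⟨y, hy⟩ := Fintype.exists_ne_of_one_lt_card hcard x
  obtain ⟨w⟩ := hconn.preconnected x y
  cases w with
  | nil => exact absurd rfl hy
  | cons h p => exact ⟨_, (G.mem_neighborFinset _ _).2 h⟩

lemma wt_pos (hdist : ∀ x y : N, G.Adj x y → 0 < dist (pos x) (pos y))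
    (hcard : 1 < Fintype.card N) (hconn : G.Connected) (x : N) : 0 < wt G pos α x :=
  mul_pos (by norm_num)
    (Finset.sum_pos
      (fun y hy => Real.rpow_pos_of_pos (hdist _ _ ((G.mem_neighborFinset _ _).1 hy)) _)
      (neighbor_nonempty G hcard hconn x))

lemma Mform_add_left (S : Finset N) (u₁ u₂ v : N → ℝ) :
    Mform G pos α S (u₁ + u₂) v = Mform G pos α S u₁ v + Mform G pos α S u₂ v := by
  simp only [Mform_eq, Pi.add_apply, ← Finset.sum_add_distrib]
  exact Finset.sum_congr rfl fun x _ => by ring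

lemma Mform_smul_left (S : Finset N) (c : ℝ) (u v : N → ℝ) :
    Mform G pos α S (c • u) v = c * Mform G pos α S u v := by
  simp only [Mform_eq, Pi.smul_apply, smul_eq_mul, Finset.mul_sum]
  exact Finset.sum_congr rfl fun x _ => by ring

lemma Mform_zero_left (S : Finset N) (v : N → ℝ) :
    Mform G pos α S (0 : N → ℝ) v = 0 := by
  simp [Mform_eq]

lemma Mform_smul_smul (S : Finset N) (c : ℝ) (v : N → ℝ) :
    Mform G pos α S (c • v) (c • v) = c ^ 2 * Mform G pos α S v v := by
  simp only [Mform_eq, Pi.smul_apply, smul_eq_mul, Finset.mul_sum]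
  exact Finset.sum_congr rfl fun x _ => by ring

lemma Mform_zero_eq (hdist : ∀ x y : N, G.Adj x y → 0 < dist (pos x) (pos y))
    (hcard : 1 < Fintype.card N) (hconn : G.Connected) (v : N → ℝ)
    (h : Mform G pos α Finset.univ v v = 0) : ∀ x, v x = 0 := by
  rw [Mform_eq] at h
  intro x
  have hx := (Finset.sum_eq_zero_iff_of_nonneg
    (fun x _ => mul_nonneg (wt_nonneg G pos α x) (mul_self_nonneg (v x)))).1 h x (mem_univ x)
  have hw := wt_pos G pos α hdist hcard hconn x
  have hvv : v x * v x = 0 := by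
    rcases mul_eq_zero.1 hx with h' | h'
    · exact absurd h' hw.ne'
    · exact h'
  exact mul_self_eq_zero.1 hvv

lemma Lform_zero_adj (hdist : ∀ x y : N, G.Adj x y → 0 < dist (pos x) (pos y))
    (v : N → ℝ) (h : Lform G pos α Finset.univ v v = 0) :
    ∀ x y, G.Adj x y → v x = v y := by
  unfold Lform at h
  intro x y hxy
  have hterm := (Finset.sum_eq_zero_iff_of_nonneg
    (fun x _ => mul_nonneg (by norm_num : (0:ℝ) ≤ 1/2)
      (Finset.sum_nonneg fun y _ =>
        div_nonneg (mul_self_nonneg _) (Real.rpow_nonneg dist_nonneg _)))).1 h x (mem_univ x)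
  have hsum : ∑ y ∈ G.neighborFinset x,
      ((v x - v y) * (v x - v y)) / dist (pos x) (pos y) ^ α = 0 := by
    rcases mul_eq_zero.1 hterm with h' | h'
    · norm_num at h'
    · exact h'
  have h0 := (Finset.sum_eq_zero_iff_of_nonneg
    (fun y _ => div_nonneg (mul_self_nonneg _) (Real.rpow_nonneg dist_nonneg _))).1 hsum y
      ((G.mem_neighborFinset _ _).2 hxy)
  have hd : dist (pos x) (pos y) ^ α ≠ 0 := (Real.rpow_pos_of_pos (hdist x y hxy) α).ne'
  have hz := (div_eq_zero_iff.1 h0).resolve_right hd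
  exact sub_eq_zero.1 (mul_self_eq_zero.1 hz)

omit [Fintype N] in
lemma walk_const {G : SimpleGraph N} {v : N → ℝ} (hadj : ∀ x y, G.Adj x y → v x = v y)
    {x y : N} (w : G.Walk x y) : v x = v y := by
  induction w with
  | nil => rfl
  | cons h p ih => exact (hadj _ _ h).trans ih

lemma ip_comm (u v : N → ℝ) : ip u v = ip v u := by
  simp [ip, mul_comm]

lemma ip_add_left (a b c : N → ℝ) : ip (a + b) c = ip a c + ip b c := by
  simp [ip, add_mul, Finset.sum_add_distrib]

lemma ip_sub_left (a b c : N → ℝ) : ip (a - b) c = ip a c - ip b c := by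
  simp [ip, sub_mul, Finset.sum_sub_distrib]

lemma ip_add_right (a b c : N → ℝ) : ip a (b + c) = ip a b + ip a c := by
  simp [ip, mul_add, Finset.sum_add_distrib]

lemma ip_smul_left (c : ℝ) (a b : N → ℝ) : ip (c • a) b = c * ip a b := by
  simp only [ip, Pi.smul_apply, smul_eq_mul, Finset.mul_sum]
  exact Finset.sum_congr rfl fun x _ => by ring

lemma ip_smul_right (c : ℝ) (a b : N → ℝ) : ip a (c • b) = c * ip a b := by
  simp only [ip, Pi.smul_apply, smul_eq_mul, Finset.mul_sum]
  exact Finset.sum_congr rfl fun x _ => by ring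

end Aux

theorem stmt8 [Fintype N] [DecidableEq N] (G : SimpleGraph N) [DecidableRel G.Adj]
    (pos : N → EuclideanSpace ℝ (Fin n)) (α : ℝ)
    (hα : 0 ≤ α ∧ α ≤ 2) (hpos : Function.Injective pos)
    (hdist : ∀ x y : N, G.Adj x y → 0 < dist (pos x) (pos y))
    (hcard : 1 < Fintype.card N) (hconn : G.Connected)
    (Γ : Set N) (hΓ : Γ.Nonempty)
    (P : Finset (Finset N))
    (hPne : ∀ T ∈ P, T.Nonempty)
    (hPdisj : ∀ T ∈ P, ∀ S ∈ P, T ≠ S → Disjoint T S)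
    (hPcover : ∀ x : N, ∃ T ∈ P, x ∈ T)
    (Pi : (N → ℝ) → (N → ℝ))
    (hPi : ∀ v : N → ℝ, ∀ T ∈ P, ∀ x ∈ T, Pi v x = avg G pos α T v)
    (K : (N → ℝ) →ₗ[ℝ] (N → ℝ))
    (hKsym : ∀ u v : N → ℝ, ip (K u) v = ip u (K v))
    (γ γ' : ℝ) (hγ : 0 < γ) (hγγ' : γ ≤ γ')
    (hspec : ∀ v : N → ℝ, (∀ x ∈ Γ, v x = 0) →
      γ * Lform G pos α Finset.univ v v ≤ ip (K v) v ∧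
        ip (K v) v ≤ γ' * Lform G pos α Finset.univ v v)
    (f u : N → ℝ) (hu : ∀ x ∈ Γ, u x = 0)
    (hsol : ∀ v : N → ℝ, (∀ x ∈ Γ, v x = 0) → ip (K u) v = ip f v)
    (uH : N → ℝ) (huHV : ∀ x ∈ Γ, uH x = 0)
    (huHmem : ∀ w : N → ℝ, ((∀ x ∈ Γ, w x = 0) ∧ Pi w = 0) → ip (K uH) w = 0)
    (huHsol : ∀ v : N → ℝ, ((∀ x ∈ Γ, v x = 0) ∧
        (∀ w : N → ℝ, ((∀ x ∈ Γ, w x = 0) ∧ Pi w = 0) → ip (K v) w = 0)) →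
      ip (K uH) v = ip f v)
    (Cpi H : ℝ) (hCpi : 0 < Cpi) (hH : 0 < H)
    (happrox : ∀ T ∈ P, ∀ v : N → ℝ,
      Mnorm G pos α T (fun x => v x - Pi v x) ≤ Cpi * H * Lnorm G pos α T v) :
    Lnorm G pos α Finset.univ (fun x => u x - uH x) ≤
      Cpi * γ⁻¹ * H *
        sSup {r : ℝ | ∃ v : N → ℝ, Mnorm G pos α Finset.univ v = 1 ∧ r = ip f v} := by
  classical
  set e : N → ℝ := fun x => u x - uH x with he_def
  have heΓ : ∀ x ∈ Γ, e x = 0 := fun x hx => by simp [he_def, hu x hx, huHV x hx]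
  have hD : ∀ T ∈ P, 0 < Mform G pos α T (fun _ => 1) (fun _ => 1) := by
    intro T hT
    rw [Mform_eq]
    refine Finset.sum_pos (fun x _ => ?_) (hPne T hT)
    simpa using wt_pos G pos α hdist hcard hconn x
  -- the Dirichlet subspace
  let Vs : Submodule ℝ (N → ℝ) :=
    { carrier := {v | ∀ x ∈ Γ, v x = 0}
      add_mem' := fun {a b} ha hb x hx => by
        show a x + b x = 0
        rw [ha x hx, hb x hx, add_zero]
      zero_mem' := fun x _ => rfl
      smul_mem' := fun c a ha x hx => by
        show c • a x = 0
        rw [ha x hx, smul_zero] }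
  have hBsymm : ∀ a b : N → ℝ, ip (K a) b = ip (K b) a := fun a b => by
    rw [hKsym a b, ip_comm]
  let B : LinearMap.BilinForm ℝ ↥Vs :=
    LinearMap.mk₂ ℝ (fun v w : ↥Vs => ip (K v.1) w.1)
      (fun a b c => by
        show ip (K ((a : N → ℝ) + (b : N → ℝ))) c.1 = _
        rw [map_add, ip_add_left])
      (fun r a b => by
        show ip (K (r • (a : N → ℝ))) b.1 = _
        rw [map_smul]
        simpa using ip_smul_left r (K a.1) b.1)
      (fun a b c => by
        show ip (K a.1) ((b : N → ℝ) + (c : N → ℝ)) = _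
        rw [ip_add_right])
      (fun r a b => by
        show ip (K a.1) (r • (b : N → ℝ)) = _
        rw [ip_smul_right]
        rfl)
  have hBapp : ∀ a b : ↥Vs, B a b = ip (K a.1) b.1 := fun a b => rfl
  have hBrefl : B.IsRefl := by
    intro a b h
    rw [hBapp] at h ⊢
    rw [hBsymm]
    exact h
  have hBdef : ∀ v : ↥Vs, B v v = 0 → v = 0 := by
    intro v hv
    have hv' : ip (K v.1) v.1 = 0 := hv
    have h1 := (hspec v.1 v.2).1
    have h2 : Lform G pos α Finset.univ v.1 v.1 = 0 := by
      have h3 := Lform_nonneg G pos α Finset.univ v.1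
      nlinarith
    have hadj := Lform_zero_adj G pos α hdist v.1 h2
    have hzero : ∀ x, v.1 x = 0 := by
      obtain ⟨g, hg⟩ := hΓ
      intro x
      obtain ⟨w⟩ := hconn.preconnected x g
      rw [walk_const hadj w, v.2 g hg]
    exact Subtype.ext (funext hzero)
  have hBnd : B.Nondegenerate := ⟨fun v hv => hBdef v (hv v), fun v hv => hBdef v (hv v)⟩
  haveI : FiniteDimensional ℝ ↥Vs := inferInstance
  -- the fine-scale space W
  let Ws : Submodule ℝ ↥Vs :=
    { carrier := {v | ∀ T ∈ P, Mform G pos α T v.1 (fun _ => 1) = 0}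
      add_mem' := fun {a b} ha hb T hT => by
        rw [Submodule.coe_add, Mform_add_left, ha T hT, hb T hT, add_zero]
      zero_mem' := fun T hT => by
        rw [Submodule.coe_zero, Mform_zero_left]
      smul_mem' := fun c a ha T hT => by
        rw [Submodule.coe_smul, Mform_smul_left, ha T hT, mul_zero] }
  have hWchar : ∀ v : ↥Vs, v ∈ Ws ↔ Pi v.1 = 0 := by
    intro v
    constructor
    · intro hv
      funext x
      obtain ⟨T, hT, hxT⟩ := hPcover x
      rw [hPi v.1 T hT x hxT]
      show avg G pos α T v.1 = 0
      unfold avg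
      rw [hv T hT, zero_div]
    · intro hv T hT
      obtain ⟨x, hxT⟩ := hPne T hT
      have h1 := hPi v.1 T hT x hxT
      rw [hv] at h1
      have h0 : avg G pos α T v.1 = 0 := by
        rw [← h1]; rfl
      unfold avg at h0
      exact (div_eq_zero_iff.1 h0).resolve_right (hD T hT).ne'
  let e' : ↥Vs := ⟨e, heΓ⟩
  have hKe : K e = K u - K uH := by
    rw [show e = u - uH from rfl, map_sub]
  have heVH : ∀ v : ↥Vs, v ∈ B.orthogonal Ws → ip (K e) v.1 = 0 := by
    intro v hv
    have hVH : ∀ w : N → ℝ, ((∀ x ∈ Γ, w x = 0) ∧ Pi w = 0) → ip (K v.1) w = 0 := by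
      rintro w ⟨hw1, hw2⟩
      have hwW : (⟨w, hw1⟩ : ↥Vs) ∈ Ws := (hWchar ⟨w, hw1⟩).2 hw2
      have h0 := hv ⟨w, hw1⟩ hwW
      have h0' : ip (K w) v.1 = 0 := h0
      rw [hBsymm] at h0'
      exact h0'
    have h1 : ip (K u) v.1 = ip f v.1 := hsol v.1 v.2
    have h2 : ip (K uH) v.1 = ip f v.1 := huHsol v.1 ⟨v.2, hVH⟩
    rw [hKe, ip_sub_left, h1, h2, sub_self]
  have heW : e' ∈ Ws := by
    rw [← LinearMap.BilinForm.orthogonal_orthogonal hBnd hBrefl Ws]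
    intro v hv
    show B v e' = 0
    rw [hBapp, hBsymm]
    exact heVH v hv
  have hPie : Pi e = 0 := (hWchar e').1 heW
  -- splitting sums over the partition
  have hsplit : ∀ g : N → ℝ, ∑ x, g x = ∑ T ∈ P, ∑ x ∈ T, g x := by
    intro g
    have huniv : (Finset.univ : Finset N) = P.biUnion id := by
      ext x
      simp only [Finset.mem_biUnion, id, mem_univ, true_iff]
      exact hPcover x
    have hdisj' : Set.PairwiseDisjoint (↑P : Set (Finset N)) (id : Finset N → Finset N) :=
      fun T hT S hS hne => hPdisj T (Finset.mem_coe.1 hT) S (Finset.mem_coe.1 hS) hne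
    rw [huniv, Finset.sum_biUnion hdisj']
    rfl
  have hMsplit : Mform G pos α Finset.univ e e = ∑ T ∈ P, Mform G pos α T e e := by
    simp only [Mform_eq]
    exact hsplit _
  have hLsplit : Lform G pos α Finset.univ e e = ∑ T ∈ P, Lform G pos α T e e := by
    unfold Lform
    exact hsplit _
  have hsub_e : ∀ T ∈ P, Mnorm G pos α T e ≤ Cpi * H * Lnorm G pos α T e := by
    intro T hT
    have h1 := happrox T hT e
    have hfn : (fun x => e x - Pi e x) = e := by
      funext x
      rw [hPie]
      simp
    rwa [hfn] at h1
  have hCH : 0 < Cpi * H := mul_pos hCpi hH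
  have hMLe : Mform G pos α Finset.univ e e
      ≤ (Cpi * H) ^ 2 * Lform G pos α Finset.univ e e := by
    rw [hMsplit, hLsplit, Finset.mul_sum]
    refine Finset.sum_le_sum fun T hT => ?_
    have h1 := hsub_e T hT
    calc Mform G pos α T e e = (Mnorm G pos α T e) ^ 2 :=
          (Real.sq_sqrt (Mform_nonneg G pos α T e)).symm
      _ ≤ (Cpi * H * Lnorm G pos α T e) ^ 2 :=
          pow_le_pow_left₀ (Real.sqrt_nonneg _) h1 2
      _ = (Cpi * H) ^ 2 * (Lnorm G pos α T e) ^ 2 := by ring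
      _ = (Cpi * H) ^ 2 * Lform G pos α T e e := by
          unfold Lnorm
          rw [Real.sq_sqrt (Lform_nonneg G pos α T e)]
  have hMnorm_le : Mnorm G pos α Finset.univ e ≤ Cpi * H * Lnorm G pos α Finset.univ e := by
    unfold Mnorm Lnorm
    calc Real.sqrt (Mform G pos α Finset.univ e e)
        ≤ Real.sqrt ((Cpi * H) ^ 2 * Lform G pos α Finset.univ e e) :=
          Real.sqrt_le_sqrt hMLe
      _ = Cpi * H * Real.sqrt (Lform G pos α Finset.univ e e) := by
          rw [Real.sqrt_mul (sq_nonneg _), Real.sqrt_sq hCH.le]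
  -- the dual norm of f
  set SS := {r : ℝ | ∃ v : N → ℝ, Mnorm G pos α Finset.univ v = 1 ∧ r = ip f v} with hSS
  have hmem_norm : ∀ v : N → ℝ, Mnorm G pos α Finset.univ v = 1 →
      Mform G pos α Finset.univ v v = 1 := by
    intro v hv
    have h1 := Real.sq_sqrt (Mform_nonneg G pos α Finset.univ v)
    unfold Mnorm at hv
    rw [← h1, hv]
    norm_num
  have hbdd : BddAbove SS := by
    refine ⟨∑ x, |f x| * Real.sqrt (wt G pos α x)⁻¹, ?_⟩
    rintro r ⟨v, hv1, rfl⟩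
    have hM1 := hmem_norm v hv1
    have hvx : ∀ x, |v x| ≤ Real.sqrt (wt G pos α x)⁻¹ := by
      intro x
      have hwx := wt_pos G pos α hdist hcard hconn x
      have hsingle : wt G pos α x * (v x * v x) ≤ 1 := by
        rw [Mform_eq] at hM1
        rw [← hM1]
        exact Finset.single_le_sum
          (fun y _ => mul_nonneg (wt_nonneg G pos α y) (mul_self_nonneg _)) (mem_univ x)
      have h2 : v x * v x ≤ (wt G pos α x)⁻¹ := by
        have h3 : wt G pos α x * (v x * v x) ≤ wt G pos α x * (wt G pos α x)⁻¹ := by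
          rw [mul_inv_cancel₀ hwx.ne']
          exact hsingle
        exact le_of_mul_le_mul_left h3 hwx
      calc |v x| = Real.sqrt (v x * v x) := by rw [Real.sqrt_mul_self_eq_abs]
        _ ≤ Real.sqrt (wt G pos α x)⁻¹ := Real.sqrt_le_sqrt h2
    calc ip f v = ∑ x, f x * v x := rfl
      _ ≤ ∑ x, |f x| * Real.sqrt (wt G pos α x)⁻¹ := by
          refine Finset.sum_le_sum fun x _ => ?_
          calc f x * v x ≤ |f x * v x| := le_abs_self _
            _ = |f x| * |v x| := abs_mul _ _
            _ ≤ |f x| * Real.sqrt (wt G pos α x)⁻¹ :=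
                mul_le_mul_of_nonneg_left (hvx x) (abs_nonneg _)
  have hmemSS : ∀ v : N → ℝ, Mform G pos α Finset.univ v v ≠ 0 →
      (Real.sqrt (Mform G pos α Finset.univ v v))⁻¹ * ip f v ∈ SS := by
    intro v hv
    have hpos' : 0 < Mform G pos α Finset.univ v v :=
      lt_of_le_of_ne (Mform_nonneg G pos α Finset.univ v) (Ne.symm hv)
    refine ⟨(Real.sqrt (Mform G pos α Finset.univ v v))⁻¹ • v, ?_, ?_⟩
    · unfold Mnorm
      rw [Mform_smul_smul, inv_pow, Real.sq_sqrt hpos'.le,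
        inv_mul_cancel₀ hpos'.ne', Real.sqrt_one]
    · rw [ip_smul_right]
  have hW0 : Mform G pos α Finset.univ (fun _ => (1:ℝ)) (fun _ => (1:ℝ)) ≠ 0 := by
    have : Nonempty N := Fintype.card_pos_iff.1 (by omega)
    have hp : 0 < Mform G pos α Finset.univ (fun _ => (1:ℝ)) (fun _ => (1:ℝ)) := by
      rw [Mform_eq]
      refine Finset.sum_pos (fun x _ => ?_) Finset.univ_nonempty
      simpa using wt_pos G pos α hdist hcard hconn x
    exact hp.ne'
  have hsup0 : 0 ≤ sSup SS := by
    set v1 : N → ℝ := fun _ => (1:ℝ) with hv1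
    have hr := hmemSS v1 hW0
    have hneg : Mform G pos α Finset.univ (-v1) (-v1) = Mform G pos α Finset.univ v1 v1 := by
      have : -v1 = (-1 : ℝ) • v1 := by funext x; simp
      rw [this, Mform_smul_smul]
      norm_num
    have hrneg := hmemSS (-v1) (by rw [hneg]; exact hW0)
    rw [hneg] at hrneg
    have hipneg : ip f (-v1) = -ip f v1 := by
      have : -v1 = (-1 : ℝ) • v1 := by funext x; simp
      rw [this, ip_smul_right]
      ring
    rw [hipneg] at hrneg
    have h1 := le_csSup hbdd hr
    have h2 := le_csSup hbdd hrneg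
    have hs0 : 0 ≤ Real.sqrt (Mform G pos α Finset.univ v1 v1) := Real.sqrt_nonneg _
    nlinarith
  have hfle : ∀ v : N → ℝ, ip f v ≤ sSup SS * Mnorm G pos α Finset.univ v := by
    intro v
    by_cases hv : Mform G pos α Finset.univ v v = 0
    · have hz := Mform_zero_eq G pos α hdist hcard hconn v hv
      have h1 : ip f v = 0 := by
        unfold ip
        refine Finset.sum_eq_zero fun x _ => ?_
        rw [hz x, mul_zero]
      have h2 : Mnorm G pos α Finset.univ v = 0 := by
        unfold Mnorm
        rw [hv, Real.sqrt_zero]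
      rw [h1, h2, mul_zero]
    · have hpos' : 0 < Mform G pos α Finset.univ v v :=
        lt_of_le_of_ne (Mform_nonneg G pos α Finset.univ v) (Ne.symm hv)
      have hs : 0 < Real.sqrt (Mform G pos α Finset.univ v v) := Real.sqrt_pos.2 hpos'
      have hle := le_csSup hbdd (hmemSS v hv)
      have h3 := mul_le_mul_of_nonneg_left hle hs.le
      rwa [← mul_assoc, mul_inv_cancel₀ hs.ne', one_mul, mul_comm (Real.sqrt _)] at h3
  -- final chain
  set ℓ := Lnorm G pos α Finset.univ e with hℓdef
  have hℓ0 : 0 ≤ ℓ := Real.sqrt_nonneg _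
  have hℓ2 : Lform G pos α Finset.univ e e = ℓ ^ 2 :=
    (Real.sq_sqrt (Lform_nonneg G pos α Finset.univ e)).symm
  have hK_e : ip (K e) e = ip f e := by
    have h1 : ip (K u) e = ip f e := hsol e heΓ
    have h2 : ip (K uH) e = 0 := huHmem e ⟨heΓ, hPie⟩
    rw [hKe, ip_sub_left, h1, h2, sub_zero]
  have hchain : γ * ℓ ^ 2 ≤ sSup SS * (Cpi * H * ℓ) := by
    have ha := (hspec e heΓ).1
    rw [hℓ2] at ha
    calc γ * ℓ ^ 2 ≤ ip (K e) e := ha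
      _ = ip f e := hK_e
      _ ≤ sSup SS * Mnorm G pos α Finset.univ e := hfle e
      _ ≤ sSup SS * (Cpi * H * ℓ) := mul_le_mul_of_nonneg_left hMnorm_le hsup0
  show ℓ ≤ Cpi * γ⁻¹ * H * sSup SS
  rcases eq_or_lt_of_le hℓ0 with h0 | h0
  · rw [← h0]
    exact mul_nonneg (mul_nonneg (mul_nonneg hCpi.le (inv_nonneg.2 hγ.le)) hH.le) hsup0
  · have h1 : (γ * ℓ) * ℓ ≤ (sSup SS * (Cpi * H)) * ℓ := by nlinarith
    have h2 : γ * ℓ ≤ sSup SS * (Cpi * H) := le_of_mul_le_mul_right h1 h0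
    have h3 := mul_le_mul_of_nonneg_left h2 (inv_nonneg.2 hγ.le)
    rw [← mul_assoc, inv_mul_cancel₀ hγ.ne', one_mul] at h3
    calc ℓ ≤ γ⁻¹ * (sSup SS * (Cpi * H)) := h3
      _ = Cpi * γ⁻¹ * H * sSup SS := by ring
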